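/- Let π be a probability measure on [−1,1], and for A ∈ ℝ, d ≥ 0 define the tilted measure π_{(A,d)} by dπ_{(A,d)}/dπ(x) ∝ exp(Ax − c·(d/2)x²) for a fixed constant c. Then the 1-Wasserstein distance satisfies sup_{d≥0} d_{W₁}(π_{(A₁,d)}, π_{(A₂,d)}) ≤ C·|A₁ − A₂| for a universal constant C (one may take C = √2). -/

import Mathlib

open MeasureTheory
open scoped NNReal ENNReal

/-- The quadratic exponential tilt `dπ_{(A,d)}/dπ(x) ∝ exp(Ax - c(d/2)x²)`. -/
noncomputable def tilt (pi0 : Measure ℝ) (c d A : ℝ) : Measure ℝ :=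
  pi0.withDensity (fun x => ENNReal.ofReal
    (Real.exp (A * x - c * (d / 2) * x ^ 2)
      / ∫ y, Real.exp (A * y - c * (d / 2) * y ^ 2) ∂pi0))

namespace TiltAux

variable {pi0 : Measure ℝ} [IsProbabilityMeasure pi0]

lemma ae_Icc (hsupp : pi0 (Set.Icc (-1 : ℝ) 1)ᶜ = 0) :
    ∀ᵐ x ∂pi0, x ∈ Set.Icc (-1 : ℝ) 1 := by
  exact MeasureTheory.mem_ae_iff.mpr hsupp

lemma ker_le {c d R A x : ℝ} (hx : x ∈ Set.Icc (-1 : ℝ) 1) (hA : |A| ≤ R) :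
    Real.exp (A * x - c * (d / 2) * x ^ 2) ≤ Real.exp (R + |c * (d / 2)|) := by
  apply Real.exp_le_exp.mpr
  have hx1 : |x| ≤ 1 := abs_le.mpr ⟨hx.1, hx.2⟩
  have h1 : A * x ≤ R := by
    calc A * x ≤ |A * x| := le_abs_self _
    _ = |A| * |x| := abs_mul _ _
    _ ≤ R * 1 := by
        apply mul_le_mul hA hx1 (abs_nonneg _) ((abs_nonneg A).trans hA)
    _ = R := mul_one R
  have h2 : -(c * (d / 2) * x ^ 2) ≤ |c * (d / 2)| := by
    have : |c * (d / 2) * x ^ 2| ≤ |c * (d / 2)| := by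
      have hx2 : x ^ 2 ≤ 1 := by nlinarith [sq_abs x, abs_nonneg x]
      rw [abs_mul, abs_pow, sq_abs]
      nlinarith [abs_nonneg (c * (d / 2)), sq_nonneg x]
    nlinarith [neg_abs_le (c * (d / 2) * x ^ 2)]
  linarith

lemma cont_ker (c d A : ℝ) :
    Continuous fun x : ℝ => Real.exp (A * x - c * (d / 2) * x ^ 2) := by
  fun_prop

lemma integrable_ker_mul (hsupp : pi0 (Set.Icc (-1 : ℝ) 1)ᶜ = 0) (c d A : ℝ)
    {φ : ℝ → ℝ} (hφ : AEStronglyMeasurable φ pi0) {B : ℝ} (hB : ∀ᵐ x ∂pi0, |φ x| ≤ B) :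
    Integrable (fun x => φ x * Real.exp (A * x - c * (d / 2) * x ^ 2)) pi0 := by
  refine Integrable.mono' (integrable_const (B * Real.exp (|A| + |c * (d / 2)|)))
    (hφ.mul (cont_ker c d A).aestronglyMeasurable) ?_
  filter_upwards [ae_Icc hsupp, hB] with x hx hxB
  rw [Real.norm_eq_abs, abs_mul, Real.abs_exp]
  exact mul_le_mul hxB (ker_le hx le_rfl) (Real.exp_pos _).le
    ((abs_nonneg _).trans hxB)

lemma integrable_ker (hsupp : pi0 (Set.Icc (-1 : ℝ) 1)ᶜ = 0) (c d A : ℝ) :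
    Integrable (fun x => Real.exp (A * x - c * (d / 2) * x ^ 2)) pi0 := by
  have := integrable_ker_mul hsupp c d A (φ := fun _ => (1 : ℝ))
    aestronglyMeasurable_const (B := 1) (Filter.Eventually.of_forall fun _ => by norm_num)
  simpa using this

lemma Z_pos (hsupp : pi0 (Set.Icc (-1 : ℝ) 1)ᶜ = 0) (c d A : ℝ) :
    0 < ∫ x, Real.exp (A * x - c * (d / 2) * x ^ 2) ∂pi0 := by
  rw [integral_pos_iff_support_of_nonneg (fun x => (Real.exp_pos _).le)
    (integrable_ker hsupp c d A)]
  have : (Function.support fun x : ℝ => Real.exp (A * x - c * (d / 2) * x ^ 2)) = Set.univ := by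
    ext x; simp [Real.exp_ne_zero]
  rw [this]
  simp

lemma tilt_integral (hsupp : pi0 (Set.Icc (-1 : ℝ) 1)ᶜ = 0) (c d A : ℝ) (φ : ℝ → ℝ) :
    ∫ x, φ x ∂(tilt pi0 c d A) =
      (∫ x, φ x * Real.exp (A * x - c * (d / 2) * x ^ 2) ∂pi0) /
        (∫ x, Real.exp (A * x - c * (d / 2) * x ^ 2) ∂pi0) := by
  set Z : ℝ := ∫ x, Real.exp (A * x - c * (d / 2) * x ^ 2) ∂pi0 with hZdef
  have hZ : 0 < Z := Z_pos hsupp c d A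
  have hmeas : Measurable fun x : ℝ =>
      Real.toNNReal (Real.exp (A * x - c * (d / 2) * x ^ 2) / Z) :=
    (((cont_ker c d A).div_const Z).measurable).real_toNNReal
  have hrw : tilt pi0 c d A = pi0.withDensity
      (fun x => ((Real.toNNReal (Real.exp (A * x - c * (d / 2) * x ^ 2) / Z) : ℝ≥0) : ℝ≥0∞)) := by
    rfl
  rw [hrw, integral_withDensity_eq_integral_smul hmeas]
  have : ∀ x : ℝ, (Real.toNNReal (Real.exp (A * x - c * (d / 2) * x ^ 2) / Z) : ℝ≥0) • φ x
      = φ x * Real.exp (A * x - c * (d / 2) * x ^ 2) / Z := by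
    intro x
    rw [NNReal.smul_def, Real.coe_toNNReal _ (by positivity), smul_eq_mul]
    ring
  simp_rw [this]
  rw [integral_div]

lemma tilt_prob (hsupp : pi0 (Set.Icc (-1 : ℝ) 1)ᶜ = 0) (c d A : ℝ) :
    IsProbabilityMeasure (tilt pi0 c d A) := by
  constructor
  set Z : ℝ := ∫ x, Real.exp (A * x - c * (d / 2) * x ^ 2) ∂pi0 with hZdef
  have hZ : 0 < Z := Z_pos hsupp c d A
  have hint : Integrable (fun x => Real.exp (A * x - c * (d / 2) * x ^ 2) / Z) pi0 :=
    (integrable_ker hsupp c d A).div_const Z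
  rw [tilt, withDensity_apply _ MeasurableSet.univ, Measure.restrict_univ,
    ← ofReal_integral_eq_lintegral_ofReal hint
      (Filter.Eventually.of_forall fun x => by positivity)]
  rw [integral_div, div_self hZ.ne']
  simp

lemma tilt_ae_Icc (hsupp : pi0 (Set.Icc (-1 : ℝ) 1)ᶜ = 0) (c d A : ℝ) :
    ∀ᵐ x ∂(tilt pi0 c d A), x ∈ Set.Icc (-1 : ℝ) 1 := by
  refine MeasureTheory.mem_ae_iff.mpr ?_
  exact withDensity_absolutelyContinuous pi0 _ hsupp

lemma hasDerivAt_ker_integral (hsupp : pi0 (Set.Icc (-1 : ℝ) 1)ᶜ = 0) (c d : ℝ)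
    {φ : ℝ → ℝ} (hφ : AEStronglyMeasurable φ pi0) (hφb : ∀ x, |φ x| ≤ 1) (A₀ : ℝ) :
    HasDerivAt (fun A => ∫ x, φ x * Real.exp (A * x - c * (d / 2) * x ^ 2) ∂pi0)
      (∫ x, φ x * x * Real.exp (A₀ * x - c * (d / 2) * x ^ 2) ∂pi0) A₀ := by
  have key := hasDerivAt_integral_of_dominated_loc_of_deriv_le (μ := pi0)
    (F := fun A x => φ x * Real.exp (A * x - c * (d / 2) * x ^ 2))
    (F' := fun A x => φ x * x * Real.exp (A * x - c * (d / 2) * x ^ 2))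
    (x₀ := A₀) (s := Metric.ball A₀ 1)
    (bound := fun _ => Real.exp (|A₀| + 1 + |c * (d / 2)|)) (Metric.ball_mem_nhds A₀ one_pos)
    (Filter.Eventually.of_forall fun A =>
      hφ.mul (cont_ker c d A).aestronglyMeasurable)
    (integrable_ker_mul hsupp c d A₀ hφ (Filter.Eventually.of_forall hφb))
    ((hφ.mul aestronglyMeasurable_id).mul (cont_ker c d A₀).aestronglyMeasurable)
    ?_ (integrable_const _) ?_
  · exact key.2
  · filter_upwards [ae_Icc hsupp] with x hx A hA
    have hx1 : |x| ≤ 1 := abs_le.mpr ⟨hx.1, hx.2⟩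
    have hA1 : |A| ≤ |A₀| + 1 := by
      have := Metric.mem_ball.mp hA
      rw [Real.dist_eq] at this
      have h2 := abs_sub_abs_le_abs_sub A A₀
      linarith
    rw [Real.norm_eq_abs, abs_mul, abs_mul, Real.abs_exp]
    calc |φ x| * |x| * Real.exp (A * x - c * (d / 2) * x ^ 2)
        ≤ 1 * 1 * Real.exp (|A₀| + 1 + |c * (d / 2)|) := by
          refine mul_le_mul (mul_le_mul (hφb x) hx1 (abs_nonneg _) ?_)
            (ker_le hx hA1) (Real.exp_pos _).le (by norm_num)
          exact (abs_nonneg _).trans (hφb x)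
      _ = Real.exp (|A₀| + 1 + |c * (d / 2)|) := by ring
  · refine Filter.Eventually.of_forall fun x A hA => ?_
    have h1 : HasDerivAt (fun A : ℝ => A * x - c * (d / 2) * x ^ 2) x A :=
      (hasDerivAt_mul_const x).sub_const _
    have h3 := HasDerivAt.const_mul (φ x) h1.exp
    convert h3 using 1
    · rfl
    ring

lemma abs_int_le {μ : Measure ℝ} (f : ℝ → ℝ) : |∫ x, f x ∂μ| ≤ ∫ x, |f x| ∂μ := by
  simpa [Real.norm_eq_abs] using norm_integral_le_integral_norm (μ := μ) f

lemma cov_abs_le {μ : Measure ℝ} [IsProbabilityMeasure μ]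
    (hae : ∀ᵐ x ∂μ, x ∈ Set.Icc (-1 : ℝ) 1)
    {g : ℝ → ℝ} (hg : AEStronglyMeasurable g μ) (hgb : ∀ x, |g x| ≤ 1) :
    |(∫ x, g x * x ∂μ) - (∫ x, g x ∂μ) * (∫ x, x ∂μ)| ≤ 1 := by
  set m : ℝ := ∫ x, x ∂μ with hmdef
  have hxm : AEStronglyMeasurable (fun x : ℝ => x) μ := aestronglyMeasurable_id
  have haex : ∀ᵐ x ∂μ, |x| ≤ 1 := by
    filter_upwards [hae] with x hx; exact abs_le.mpr ⟨hx.1, hx.2⟩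
  have hint_x : Integrable (fun x : ℝ => x) μ := by
    refine Integrable.mono' (integrable_const 1) hxm ?_
    filter_upwards [haex] with x hx; rwa [Real.norm_eq_abs]
  have hm : |m| ≤ 1 := by
    calc |m| ≤ ∫ x, |x| ∂μ := by rw [hmdef]; exact abs_int_le _
      _ ≤ ∫ _x, (1 : ℝ) ∂μ := integral_mono_ae hint_x.abs (integrable_const 1) haex
      _ = 1 := by simp
  have hint_gx : Integrable (fun x => g x * x) μ := by
    refine Integrable.mono' (integrable_const 1) (hg.mul hxm) ?_
    filter_upwards [haex] with x hx
    rw [Real.norm_eq_abs, abs_mul]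
    calc |g x| * |x| ≤ 1 * 1 := mul_le_mul (hgb x) hx (abs_nonneg _) (by norm_num)
      _ = 1 := by norm_num
  have hint_g : Integrable g μ := by
    refine Integrable.mono' (integrable_const 1) hg ?_
    exact Filter.Eventually.of_forall fun x => by rw [Real.norm_eq_abs]; exact hgb x
  have h1 : (∫ x, g x * x ∂μ) - (∫ x, g x ∂μ) * m = ∫ x, g x * (x - m) ∂μ := by
    rw [show (fun x => g x * (x - m)) = fun x => g x * x - g x * m by funext x; ring,
      integral_sub hint_gx (hint_g.mul_const m), integral_mul_const]
  rw [h1]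
  have hgm : Integrable (fun x => g x * (x - m)) μ :=
    (hint_gx.sub (hint_g.mul_const m)).congr
      (Filter.Eventually.of_forall fun x => (mul_sub (g x) x m).symm)
  have hint_abs : Integrable (fun x => |g x * (x - m)|) μ := hgm.abs
  have hint_rhs : Integrable (fun x => 1 - m * x) μ := (integrable_const 1).sub (hint_x.const_mul m)
  calc |∫ x, g x * (x - m) ∂μ| ≤ ∫ x, |g x * (x - m)| ∂μ := abs_int_le _
    _ ≤ ∫ x, 1 - m * x ∂μ := by
        refine integral_mono_ae hint_abs hint_rhs ?_
        filter_upwards [hae] with x hx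
        have hm' := abs_le.mp hm
        have h2 : |x - m| ≤ 1 - m * x := by
          refine abs_le.mpr ⟨?_, ?_⟩ <;> nlinarith [hx.1, hx.2]
        rw [abs_mul]
        calc |g x| * |x - m| ≤ 1 * |x - m| :=
              mul_le_mul_of_nonneg_right (hgb x) (abs_nonneg _)
          _ = |x - m| := one_mul _
          _ ≤ 1 - m * x := h2
    _ = 1 - m * m := by
        rw [integral_sub (integrable_const 1) (hint_x.const_mul m), integral_const,
          integral_const_mul]
        simp [hmdef]
    _ ≤ 1 := by nlinarith [sq_nonneg m]

end TiltAux

/-- uniformly over `d ≥ 0`, the 1-Wasserstein distance (via Kantorovich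
duality: tested against 1-Lipschitz functions on `[-1,1]`) between the tilts at `A₁`
and `A₂` is at most `√2·|A₁ - A₂|`. -/
theorem wasserstein_tilt_lipschitz (pi0 : Measure ℝ) [IsProbabilityMeasure pi0]
    (hsupp : pi0 (Set.Icc (-1 : ℝ) 1)ᶜ = 0) (c A₁ A₂ : ℝ) :
    ∀ d : ℝ, 0 ≤ d → ∀ f : ℝ → ℝ, LipschitzOnWith 1 f (Set.Icc (-1 : ℝ) 1) →
      |(∫ x, f x ∂tilt pi0 c d A₁) - ∫ x, f x ∂tilt pi0 c d A₂|
        ≤ Real.sqrt 2 * |A₁ - A₂| := by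
  intro d _hd f hf
  have h11 : (-1 : ℝ) ≤ 1 := by norm_num
  set g : ℝ → ℝ := fun x => f ((Set.projIcc (-1 : ℝ) 1 h11 x : ℝ)) - f 0 with hgdef
  have h1 : LipschitzWith 1 fun x : ℝ => f ((Set.projIcc (-1 : ℝ) 1 h11 x : ℝ)) := by
    simpa using (show LipschitzWith (1 * 1) (fun x : ℝ => f ((Set.projIcc (-1 : ℝ) 1 h11 x : ℝ))) from (hf.to_restrict).comp (LipschitzWith.projIcc h11))
  have hgc : Continuous g := (h1.continuous).sub continuous_const
  have hgb : ∀ x, |g x| ≤ 1 := by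
    intro x
    have h0 : (0 : ℝ) ∈ Set.Icc (-1 : ℝ) 1 := by norm_num
    have hd := hf.dist_le_mul _ (Set.projIcc (-1 : ℝ) 1 h11 x).2 _ h0
    rw [Real.dist_eq, Real.dist_eq] at hd
    have hmem := (Set.projIcc (-1 : ℝ) 1 h11 x).2
    have : |((Set.projIcc (-1 : ℝ) 1 h11 x : ℝ)) - 0| ≤ 1 := by
      rw [sub_zero]
      exact abs_le.mpr ⟨hmem.1, hmem.2⟩
    calc |g x| = |f ((Set.projIcc (-1 : ℝ) 1 h11 x : ℝ)) - f 0| := rfl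
      _ ≤ 1 * |((Set.projIcc (-1 : ℝ) 1 h11 x : ℝ)) - 0| := by exact_mod_cast hd
      _ ≤ 1 := by rw [one_mul]; exact this
  set N : ℝ → ℝ := fun A => ∫ x, g x * Real.exp (A * x - c * (d / 2) * x ^ 2) ∂pi0 with hNdef
  set Z : ℝ → ℝ := fun A => ∫ x, Real.exp (A * x - c * (d / 2) * x ^ 2) ∂pi0 with hZdef
  have hZpos : ∀ A, 0 < Z A := fun A => TiltAux.Z_pos hsupp c d A
  -- reduce the tilt integrals of `f` to `N/Z + f 0`
  have key : ∀ A, ∫ x, f x ∂tilt pi0 c d A = N A / Z A + f 0 := by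
    intro A
    haveI := TiltAux.tilt_prob (pi0 := pi0) hsupp c d A
    have hae := TiltAux.tilt_ae_Icc (pi0 := pi0) hsupp c d A
    have hint_g : Integrable g (tilt pi0 c d A) := by
      refine Integrable.mono' (integrable_const 1) hgc.aestronglyMeasurable ?_
      exact Filter.Eventually.of_forall fun x => by rw [Real.norm_eq_abs]; exact hgb x
    have hcongr : ∫ x, f x ∂tilt pi0 c d A = ∫ x, (g x + f 0) ∂tilt pi0 c d A := by
      refine integral_congr_ae ?_
      filter_upwards [hae] with x hx
      have hpr : ((Set.projIcc (-1 : ℝ) 1 h11 x : ℝ)) = x := by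
        rw [Set.projIcc_of_mem h11 hx]
      simp [hgdef, hpr]
    rw [hcongr, integral_add hint_g (integrable_const _), integral_const]
    have := TiltAux.tilt_integral (pi0 := pi0) hsupp c d A g
    rw [this]
    simp [measure_univ, hNdef, hZdef]
  -- derivative facts
  have hN : ∀ A₀, HasDerivAt N
      (∫ x, g x * x * Real.exp (A₀ * x - c * (d / 2) * x ^ 2) ∂pi0) A₀ :=
    fun A₀ => TiltAux.hasDerivAt_ker_integral hsupp c d hgc.aestronglyMeasurable hgb A₀
  have hZD : ∀ A₀, HasDerivAt Z
      (∫ x, x * Real.exp (A₀ * x - c * (d / 2) * x ^ 2) ∂pi0) A₀ := by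
    intro A₀
    have := TiltAux.hasDerivAt_ker_integral hsupp c d (φ := fun _ => (1 : ℝ))
      aestronglyMeasurable_const (fun x => by norm_num) A₀
    simpa using this
  set G' : ℝ → ℝ := fun A =>
    ((∫ x, g x * x * Real.exp (A * x - c * (d / 2) * x ^ 2) ∂pi0) * Z A -
      N A * (∫ x, x * Real.exp (A * x - c * (d / 2) * x ^ 2) ∂pi0)) / (Z A) ^ 2 with hG'def
  have hG : ∀ A, HasDerivAt (fun A => N A / Z A) (G' A) A :=
    fun A => (hN A).div (hZD A) (hZpos A).ne'
  have hbound : ∀ A, ‖G' A‖ ≤ 1 := by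
    intro A
    haveI := TiltAux.tilt_prob (pi0 := pi0) hsupp c d A
    have hae := TiltAux.tilt_ae_Icc (pi0 := pi0) hsupp c d A
    have e1 : ∫ x, x ∂tilt pi0 c d A =
        (∫ x, x * Real.exp (A * x - c * (d / 2) * x ^ 2) ∂pi0) / Z A :=
      TiltAux.tilt_integral (pi0 := pi0) hsupp c d A _
    have e2 : ∫ x, g x ∂tilt pi0 c d A = N A / Z A :=
      TiltAux.tilt_integral (pi0 := pi0) hsupp c d A g
    have e3 : ∫ x, g x * x ∂tilt pi0 c d A =
        (∫ x, g x * x * Real.exp (A * x - c * (d / 2) * x ^ 2) ∂pi0) / Z A :=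
      TiltAux.tilt_integral (pi0 := pi0) hsupp c d A _
    have hcov := TiltAux.cov_abs_le hae (hgc.aestronglyMeasurable) hgb
    rw [e1, e2, e3] at hcov
    rw [Real.norm_eq_abs]
    have hrw : G' A = (∫ x, g x * x * Real.exp (A * x - c * (d / 2) * x ^ 2) ∂pi0) / Z A -
        N A / Z A * ((∫ x, x * Real.exp (A * x - c * (d / 2) * x ^ 2) ∂pi0) / Z A) := by
      rw [hG'def]
      have hZne : Z A ≠ 0 := (hZpos A).ne'
      dsimp only
      generalize (∫ x, g x * x * Real.exp (A * x - c * (d / 2) * x ^ 2) ∂pi0) = P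
      generalize (∫ x, x * Real.exp (A * x - c * (d / 2) * x ^ 2) ∂pi0) = Q
      field_simp
    rw [hrw]
    exact hcov
  have hmvt := Convex.norm_image_sub_le_of_norm_hasDerivWithin_le
    (f := fun A => N A / Z A) (f' := G') (s := (Set.univ : Set ℝ)) (C := 1)
    (fun x _ => (hG x).hasDerivWithinAt) (fun x _ => hbound x) convex_univ
    (Set.mem_univ A₂) (Set.mem_univ A₁)
  rw [key A₁, key A₂]
  have hsimp : N A₁ / Z A₁ + f 0 - (N A₂ / Z A₂ + f 0) = N A₁ / Z A₁ - N A₂ / Z A₂ := by ring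
  rw [hsimp]
  calc |N A₁ / Z A₁ - N A₂ / Z A₂| ≤ 1 * |A₁ - A₂| := by
        simpa [Real.norm_eq_abs] using hmvt
    _ ≤ Real.sqrt 2 * |A₁ - A₂| := by
        refine mul_le_mul_of_nonneg_right ?_ (abs_nonneg _)
        rw [show (1 : ℝ) = Real.sqrt 1 from (Real.sqrt_one).symm]
        exact Real.sqrt_le_sqrt (by norm_num)
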